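/- Let k ≥ 5 and let τ be a non-trivial permutation of a set with exactly k elements. If a permutation σ of the same set commutes with every conjugate of τ (i.e. σ·(gτg⁻¹) = (gτg⁻¹)·σ for every permutation g), then σ is the identity permutation. -/

import Mathlib

open Equiv

private lemma exists_perm_three {α : Type*} [DecidableEq α] (x y s a w b : α)
    (hxy : x ≠ y) (hxs : x ≠ s) (hys : y ≠ s)
    (haw : a ≠ w) (hab : a ≠ b) (hwb : w ≠ b) :
    ∃ g : Equiv.Perm α, g x = a ∧ g y = w ∧ g s = b := by
  set g1 : Equiv.Perm α := Equiv.swap x a with hg1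
  have h1x : g1 x = a := Equiv.swap_apply_left x a
  set g2 : Equiv.Perm α := Equiv.swap (g1 y) w * g1 with hg2
  have h2x : g2 x = a := by
    have hne1 : a ≠ g1 y := by rw [← h1x]; exact fun h => hxy (g1.injective h)
    simp only [hg2, Equiv.Perm.mul_apply, h1x]
    exact Equiv.swap_apply_of_ne_of_ne hne1 haw
  have h2y : g2 y = w := by
    simp only [hg2, Equiv.Perm.mul_apply]
    exact Equiv.swap_apply_left _ _
  set g3 : Equiv.Perm α := Equiv.swap (g2 s) b * g2 with hg3
  refine ⟨g3, ?_, ?_, ?_⟩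
  · have hne1 : a ≠ g2 s := by rw [← h2x]; exact fun h => hxs (g2.injective h)
    simp only [hg3, Equiv.Perm.mul_apply, h2x]
    exact Equiv.swap_apply_of_ne_of_ne hne1 hab
  · have hne1 : w ≠ g2 s := by rw [← h2y]; exact fun h => hys (g2.injective h)
    simp only [hg3, Equiv.Perm.mul_apply, h2y]
    exact Equiv.swap_apply_of_ne_of_ne hne1 hwb
  · simp only [hg3, Equiv.Perm.mul_apply]
    exact Equiv.swap_apply_left _ _

private lemma exists_perm_four {α : Type*} [DecidableEq α] (x y s u a w b v : α)
    (hxy : x ≠ y) (hxs : x ≠ s) (hys : y ≠ s) (hux : u ≠ x) (huy : u ≠ y) (hus : u ≠ s)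
    (haw : a ≠ w) (hab : a ≠ b) (hwb : w ≠ b) (hva : v ≠ a) (hvw : v ≠ w) (hvb : v ≠ b) :
    ∃ g : Equiv.Perm α, g x = a ∧ g y = w ∧ g s = b ∧ g u = v := by
  obtain ⟨g3, h3x, h3y, h3s⟩ := exists_perm_three x y s a w b hxy hxs hys haw hab hwb
  refine ⟨Equiv.swap (g3 u) v * g3, ?_, ?_, ?_, ?_⟩
  · have : a ≠ g3 u := by rw [← h3x]; exact fun h => hux (g3.injective h.symm)
    simp only [Equiv.Perm.mul_apply, h3x]
    exact Equiv.swap_apply_of_ne_of_ne this (Ne.symm hva)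
  · have : w ≠ g3 u := by rw [← h3y]; exact fun h => huy (g3.injective h.symm)
    simp only [Equiv.Perm.mul_apply, h3y]
    exact Equiv.swap_apply_of_ne_of_ne this (Ne.symm hvw)
  · have : b ≠ g3 u := by rw [← h3s]; exact fun h => hus (g3.injective h.symm)
    simp only [Equiv.Perm.mul_apply, h3s]
    exact Equiv.swap_apply_of_ne_of_ne this (Ne.symm hvb)
  · simp only [Equiv.Perm.mul_apply]
    exact Equiv.swap_apply_left _ _

/-- Let `k ≥ 5` and let `τ` be a non-trivial permutation of a set with exactly `k`
elements. If a permutation `σ` of the same set commutes with every conjugate of `τ`,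
then `σ` is the identity permutation. -/
theorem perm_eq_one_of_commute_all_conjugates
    {α : Type*} [Fintype α] (k : ℕ) (hk : 5 ≤ k) (hcard : Fintype.card α = k)
    (τ σ : Equiv.Perm α) (hτ : τ ≠ 1)
    (hcomm : ∀ g : Equiv.Perm α, σ * (g * τ * g⁻¹) = (g * τ * g⁻¹) * σ) :
    σ = 1 := by
  classical
  by_contra hσ
  obtain ⟨a, ha⟩ : ∃ a, σ a ≠ a := by
    by_contra h
    push_neg at h
    exact hσ (Equiv.ext fun z => h z)
  obtain ⟨x, hx⟩ : ∃ x, τ x ≠ x := by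
    by_contra h
    push_neg at h
    exact hτ (Equiv.ext fun z => h z)
  set b := σ a with hb
  set y := τ x with hy
  have hab : a ≠ b := fun h => ha h.symm
  have hxy : x ≠ y := fun h => hx h.symm
  have h5 : 5 ≤ Fintype.card α := hcard ▸ hk
  -- pick s outside {x, y, τ⁻¹ x, τ⁻¹ y}
  obtain ⟨s, hs⟩ : ∃ s, s ∉ ({x, y, τ⁻¹ x, τ⁻¹ y} : Finset α) := by
    have hc : ({x, y, τ⁻¹ x, τ⁻¹ y} : Finset α).card ≤ 4 := by
      apply le_trans (Finset.card_insert_le _ _)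
      have := Finset.card_insert_le y ({τ⁻¹ x, τ⁻¹ y} : Finset α)
      have := Finset.card_insert_le (τ⁻¹ x) ({τ⁻¹ y} : Finset α)
      simp only [Finset.card_singleton] at *
      omega
    have : (({x, y, τ⁻¹ x, τ⁻¹ y} : Finset α)ᶜ).Nonempty := by
      rw [← Finset.card_pos, Finset.card_compl]
      omega
    obtain ⟨s, hs⟩ := this
    exact ⟨s, Finset.mem_compl.mp hs⟩
  simp only [Finset.mem_insert, Finset.mem_singleton, not_or] at hs
  obtain ⟨hsx, hsy, hsix, hsiy⟩ := hs
  -- pick w outside {a, b}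
  obtain ⟨w, hw⟩ : ∃ w, w ∉ ({a, b} : Finset α) := by
    have : (({a, b} : Finset α)ᶜ).Nonempty := by
      rw [← Finset.card_pos, Finset.card_compl]
      have := Finset.card_insert_le a ({b} : Finset α)
      simp only [Finset.card_singleton] at this
      omega
    obtain ⟨w, hw⟩ := this
    exact ⟨w, Finset.mem_compl.mp hw⟩
  simp only [Finset.mem_insert, Finset.mem_singleton, not_or] at hw
  obtain ⟨hwa, hwb⟩ := hw
  set u := τ s with hu
  have hux : u ≠ x := fun h => hsix (by rw [← h, hu, Equiv.Perm.inv_def, Equiv.symm_apply_apply])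
  have huy : u ≠ y := fun h => hsiy (by rw [← h, hu, Equiv.Perm.inv_def, Equiv.symm_apply_apply])
  -- key computation: for any g, the conjugate c = gτg⁻¹ satisfies c (g t) = g (τ t),
  -- and commuting gives σ (c z) = c (σ z).
  have key : ∀ (g : Equiv.Perm α) (t : α),
      (g * τ * g⁻¹) (g t) = g (τ t) := fun g t => by
    simp [Equiv.Perm.mul_apply]
  have comm' : ∀ (g : Equiv.Perm α) (z : α),
      σ ((g * τ * g⁻¹) z) = (g * τ * g⁻¹) (σ z) := fun g z => by
    have := hcomm g
    have := congrArg (fun p : Equiv.Perm α => p z) this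
    simpa [Equiv.Perm.mul_apply] using this
  by_cases hus : u = s
  · -- τ fixes s
    obtain ⟨g, hgx, hgy, hgs⟩ := exists_perm_three x y s a w b
      hxy (Ne.symm hsx) (Ne.symm hsy) (fun h => hwa h.symm) hab hwb
    have h1 : (g * τ * g⁻¹) a = w := by rw [← hgx, key, ← hy, hgy]
    have h2 : (g * τ * g⁻¹) b = b := by rw [← hgs, key, ← hu, hus, hgs]
    have := comm' g a
    rw [h1, ← hb, h2] at this
    -- σ w = b = σ a
    exact hwa (σ.injective (this.trans hb))
  · -- τ s = u with x, y, s, u pairwise distinct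
    obtain ⟨v₁, v₂, hv₁, hv₂, hvne⟩ :
        ∃ v₁ v₂, v₁ ∈ ({a, w, b} : Finset α)ᶜ ∧ v₂ ∈ ({a, w, b} : Finset α)ᶜ ∧ v₁ ≠ v₂ := by
      rw [← Finset.one_lt_card_iff]
      rw [Finset.card_compl]
      have h1 := Finset.card_insert_le a ({w, b} : Finset α)
      have h2 := Finset.card_insert_le w ({b} : Finset α)
      simp only [Finset.card_singleton] at *
      omega
    simp only [Finset.mem_compl, Finset.mem_insert, Finset.mem_singleton, not_or] at hv₁ hv₂
    obtain ⟨hv₁a, hv₁w, hv₁b⟩ := hv₁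
    obtain ⟨hv₂a, hv₂w, hv₂b⟩ := hv₂
    have σw : ∀ v : α, v ≠ a → v ≠ w → v ≠ b → σ w = v := by
      intro v hva hvw hvb
      obtain ⟨g, hgx, hgy, hgs, hgu⟩ := exists_perm_four x y s u a w b v
        hxy (Ne.symm hsx) (Ne.symm hsy) hux huy hus
        (fun h => hwa h.symm) hab hwb hva hvw hvb
      have h1 : (g * τ * g⁻¹) a = w := by rw [← hgx, key, ← hy, hgy]
      have h2 : (g * τ * g⁻¹) b = v := by rw [← hgs, key, ← hu, hgu]
      have := comm' g a
      rw [h1, ← hb, h2] at this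
      exact this
    exact hvne ((σw v₁ hv₁a hv₁w hv₁b).symm.trans (σw v₂ hv₂a hv₂w hv₂b))
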